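/- Under the same setup, if |g_rr(r₀,θ₀)| ≥ ελ at some (r₀,θ₀) ∈ [1/2,2]×[0,π], then |g_rr(r,θ)| ≥ ελ/2 for all (r,θ) in [1/2,2]×[0,π] with |r−r₀| < ε₁ and |θ−θ₀| < ε₂, where ε₁ = min{ε/(6β(β+1)2^(β+2)), ε/(4β(β+1)(β+2)2^(β+3)), ε/8} and ε₂ = ε/8. -/

import Mathlib

theorem stmt_10 (n : ℕ) (β k₁ k₂ k₃ ε : ℝ) (l : ℤ)
    (ξ' : EuclideanSpace ℝ (Fin n)) (ξlast : ℝ)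
    (φ φ' φ'' φ''' : ℝ → ℝ)
    (hβ : 0 < β)
    (hd1 : ∀ x > (0:ℝ), HasDerivAt φ (φ' x) x)
    (hd2 : ∀ x > (0:ℝ), HasDerivAt φ' (φ'' x) x)
    (hd3 : ∀ x > (0:ℝ), HasDerivAt φ'' (φ''' x) x)
    (hcont : ContinuousOn φ''' (Set.Ioi 0))
    (hsign : ∀ x > (0:ℝ), φ' x * φ'' x > 0)
    (hk₁ : 0 < k₁) (hk₁₂ : k₁ ≤ k₂)
    (hbd : ∀ x > (0:ℝ), k₁ ≤ x * φ'' x / φ' x ∧ x * φ'' x / φ' x ≤ k₂)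
    (hk₃ : 0 < k₃)
    (hbd3 : ∀ x > (0:ℝ), |x * φ''' x / φ'' x| ≤ k₃)
    (hε0 : 0 < ε)
    (hε : ε < min (min (1 / (2 * Real.sqrt 2)) (1 / (4 * k₂ * (3 * β + 7))))
      (min (β / ((4 + 3 * k₂) * (2:ℝ) ^ β)) (1 / (8 * k₂ * k₃ * (3 * β + 7)))))
    (lam : ℝ)
    (hlam : lam = max (max ((2:ℝ) ^ (β * (l:ℝ))) ((2:ℝ) ^ (-l) * ‖ξ'‖))
      (max (|ξlast| * (2:ℝ) ^ (-2 * l) *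
              sSup ((fun r : ℝ => |φ'' r|) '' Set.Icc ((2:ℝ) ^ (-l - 1)) ((2:ℝ) ^ (-l + 1))))
           (|ξlast| * (2:ℝ) ^ (-3 * l) *
              sSup ((fun r : ℝ => |φ''' r|) '' Set.Icc ((2:ℝ) ^ (-l - 1)) ((2:ℝ) ^ (-l + 1))))))
    (g : ℝ → ℝ → ℝ)
    (hg : ∀ r θ : ℝ, g r θ = (2:ℝ) ^ (-l) * ‖ξ'‖ * r * Real.cos θ +
      ξlast * φ ((2:ℝ) ^ (-l) * r) + (2:ℝ) ^ (β * (l:ℝ)) * r ^ (-β))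
    (ε₁ ε₂ : ℝ)
    (hε₁ : ε₁ = min (min (ε / (6 * β * (β + 1) * (2:ℝ) ^ (β + 2)))
      (ε / (4 * β * (β + 1) * (β + 2) * (2:ℝ) ^ (β + 3)))) (ε / 8))
    (hε₂ : ε₂ = ε / 8)
    (r₀ θ₀ r θ : ℝ)
    (hr₀ : r₀ ∈ Set.Icc (1/2 : ℝ) 2) (hθ₀ : θ₀ ∈ Set.Icc (0:ℝ) Real.pi)
    (hr : r ∈ Set.Icc (1/2 : ℝ) 2) (hθ : θ ∈ Set.Icc (0:ℝ) Real.pi)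
    (hclose_r : |r - r₀| < ε₁) (hclose_θ : |θ - θ₀| < ε₂)
    (h₀ : ε * lam ≤ |deriv (fun r' => deriv (fun r'' => g r'' θ₀) r') r₀|) :
    ε * lam / 2 ≤ |deriv (fun r' => deriv (fun r'' => g r'' θ) r') r| := by
  set a : ℝ := (2:ℝ) ^ (-l) with ha
  set b : ℝ := (2:ℝ) ^ (β * (l:ℝ)) with hb
  have ha0 : 0 < a := zpow_pos (by norm_num) _
  have hb0 : 0 < b := Real.rpow_pos_of_pos (by norm_num) _
  -- first derivative of g in r
  have hF1 : ∀ θ' : ℝ, ∀ x > (0:ℝ), HasDerivAt (fun r'' => g r'' θ')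
      (a * ‖ξ'‖ * Real.cos θ' + ξlast * (φ' (a * x) * a) + b * (-β * x ^ (-β - 1))) x := by
    intro θ' x hx
    have h1 : HasDerivAt (fun r'' : ℝ => a * ‖ξ'‖ * r'' * Real.cos θ')
        (a * ‖ξ'‖ * Real.cos θ') x := by
      simpa using ((hasDerivAt_id x).const_mul (a * ‖ξ'‖)).mul_const (Real.cos θ')
    have h2 : HasDerivAt (fun r'' : ℝ => ξlast * φ (a * r'')) (ξlast * (φ' (a * x) * a)) x := by
      have := ((hd1 (a * x) (mul_pos ha0 hx)).comp x ((hasDerivAt_id x).const_mul a))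
      simpa [Function.comp] using this.const_mul ξlast
    have h3 : HasDerivAt (fun r'' : ℝ => b * r'' ^ (-β)) (b * (-β * x ^ (-β - 1))) x :=
      (Real.hasDerivAt_rpow_const (Or.inl hx.ne')).const_mul b
    have := (h1.add h2).add h3
    have hfun : (fun r'' => g r'' θ') =
        fun r'' : ℝ => a * ‖ξ'‖ * r'' * Real.cos θ' + ξlast * φ (a * r'') + b * r'' ^ (-β) :=
      funext fun r'' => hg r'' θ'
    rw [hfun]
    exact this
  -- second derivative of g in r (θ-independent)
  have hG2 : ∀ θ' : ℝ, ∀ x > (0:ℝ), deriv (fun r' => deriv (fun r'' => g r'' θ') r') x =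
      ξlast * (φ'' (a * x) * a * a) + b * (-β * ((-β - 1) * x ^ (-β - 1 - 1))) := by
    intro θ' x hx
    have hev : (fun r' => deriv (fun r'' => g r'' θ') r') =ᶠ[nhds x]
        (fun y => a * ‖ξ'‖ * Real.cos θ' + ξlast * (φ' (a * y) * a) + b * (-β * y ^ (-β - 1))) := by
      filter_upwards [Ioi_mem_nhds hx] with y hy
      exact (hF1 θ' y hy).deriv
    rw [hev.deriv_eq]
    have h2 : HasDerivAt (fun y : ℝ => ξlast * (φ' (a * y) * a)) (ξlast * (φ'' (a * x) * a * a)) x := by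
      have := ((hd2 (a * x) (mul_pos ha0 hx)).comp x ((hasDerivAt_id x).const_mul a))
      have := (this.mul_const a).const_mul ξlast
      simpa [Function.comp, mul_assoc] using this
    have h3 : HasDerivAt (fun y : ℝ => b * (-β * y ^ (-β - 1))) (b * (-β * ((-β - 1) * x ^ (-β - 1 - 1)))) x := by
      have := (Real.hasDerivAt_rpow_const (p := -β - 1) (Or.inl hx.ne')).const_mul (-β)
      simpa [mul_assoc] using (this.const_mul b)
    have := (((hasDerivAt_const x (a * ‖ξ'‖ * Real.cos θ')).add h2).add h3).deriv
    simp only [Pi.add_def] at this; rw [this]; ring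
  have hrpos : (0:ℝ) < r := lt_of_lt_of_le (by norm_num) hr.1
  have hr₀pos : (0:ℝ) < r₀ := lt_of_lt_of_le (by norm_num) hr₀.1
  -- the second-derivative function G2 and its derivative G3 on [1/2,2]
  set G2 : ℝ → ℝ := fun x => ξlast * (φ'' (a * x) * a * a) + b * (-β * ((-β - 1) * x ^ (-β - 1 - 1))) with hG2def
  set G3 : ℝ → ℝ := fun x => ξlast * (φ''' (a * x) * a * a * a) + b * (-β * ((-β - 1) * ((-β - 1 - 1) * x ^ (-β - 1 - 1 - 1)))) with hG3def
  have hG3 : ∀ x ∈ Set.Icc (1/2:ℝ) 2, HasDerivWithinAt G2 (G3 x) (Set.Icc (1/2:ℝ) 2) x := by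
    intro x hx
    have hxpos : (0:ℝ) < x := lt_of_lt_of_le (by norm_num) hx.1
    have h2 : HasDerivAt (fun y : ℝ => ξlast * (φ'' (a * y) * a * a)) (ξlast * (φ''' (a * x) * a * a * a)) x := by
      have := ((hd3 (a * x) (mul_pos ha0 hxpos)).comp x ((hasDerivAt_id x).const_mul a))
      have := ((this.mul_const a).mul_const a).const_mul ξlast
      simpa [Function.comp, mul_assoc] using this
    have h3 : HasDerivAt (fun y : ℝ => b * (-β * ((-β - 1) * y ^ (-β - 1 - 1))))
        (b * (-β * ((-β - 1) * ((-β - 1 - 1) * x ^ (-β - 1 - 1 - 1))))) x := by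
      have := (Real.hasDerivAt_rpow_const (p := -β - 1 - 1) (Or.inl hxpos.ne')).const_mul (-β - 1)
      have := (this.const_mul (-β)).const_mul b
      simpa [mul_assoc] using this
    exact ((h2.add h3).hasDerivWithinAt)
  -- lam bounds
  have hlam_b : b ≤ lam := hlam ▸ le_max_of_le_left (le_max_left _ _)
  have hlam0 : 0 < lam := lt_of_lt_of_le hb0 hlam_b
  -- sSup bound for φ''' term
  have hIccpos : Set.Icc ((2:ℝ) ^ (-l - 1)) ((2:ℝ) ^ (-l + 1)) ⊆ Set.Ioi 0 := by
    intro y hy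
    exact lt_of_lt_of_le (zpow_pos (by norm_num) _) hy.1
  have hbdd : BddAbove ((fun r : ℝ => |φ''' r|) '' Set.Icc ((2:ℝ) ^ (-l - 1)) ((2:ℝ) ^ (-l + 1))) :=
    isCompact_Icc.bddAbove_image (continuous_abs.comp_continuousOn (hcont.mono hIccpos))
  have hSnn : ∀ x ∈ Set.Icc (1/2:ℝ) 2, |φ''' (a * x)| ≤
      sSup ((fun r : ℝ => |φ''' r|) '' Set.Icc ((2:ℝ) ^ (-l - 1)) ((2:ℝ) ^ (-l + 1))) := by
    intro x hx
    refine le_csSup hbdd ⟨a * x, ⟨?_, ?_⟩, rfl⟩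
    · rw [zpow_sub₀ (by norm_num : (2:ℝ) ≠ 0)]
      rw [zpow_one]
      rw [div_le_iff₀ (by norm_num : (0:ℝ) < 2)] -- a / 2 ≤ a * x ↔ a ≤ a*x*2
      nlinarith [hx.1, ha0]
    · rw [zpow_add₀ (by norm_num : (2:ℝ) ≠ 0), zpow_one]
      nlinarith [hx.2, ha0]
  have ha3 : a * a * a = (2:ℝ) ^ (-3 * l) := by
    rw [ha, ← zpow_add₀ (by norm_num : (2:ℝ) ≠ 0), ← zpow_add₀ (by norm_num : (2:ℝ) ≠ 0)]
    ring_nf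
  have hlam_phi : |ξlast| * (2:ℝ) ^ (-3 * l) *
      sSup ((fun r : ℝ => |φ''' r|) '' Set.Icc ((2:ℝ) ^ (-l - 1)) ((2:ℝ) ^ (-l + 1))) ≤ lam :=
    hlam ▸ le_max_of_le_right (le_max_right _ _)
  -- bound on |G3| on [1/2,2]
  set M : ℝ := β * (β + 1) * (β + 2) * (2:ℝ) ^ (β + 3) with hM
  have hM0 : 0 < M := by
    have : (0:ℝ) < (2:ℝ) ^ (β + 3) := Real.rpow_pos_of_pos (by norm_num) _
    positivity
  have hbound : ∀ x ∈ Set.Icc (1/2:ℝ) 2, ‖G3 x‖ ≤ lam + lam * M := by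
    intro x hx
    have hxpos : (0:ℝ) < x := lt_of_lt_of_le (by norm_num) hx.1
    have h1 : |ξlast * (φ''' (a * x) * a * a * a)| ≤ lam := by
      have heq : |ξlast * (φ''' (a * x) * a * a * a)| = |ξlast| * (a * a * a) * |φ''' (a * x)| := by
        rw [abs_mul, abs_mul, abs_mul, abs_mul, abs_of_pos ha0]
        ring
      rw [heq, ha3]
      calc |ξlast| * (2:ℝ) ^ (-3 * l) * |φ''' (a * x)|
          ≤ |ξlast| * (2:ℝ) ^ (-3 * l) *
            sSup ((fun r : ℝ => |φ''' r|) '' Set.Icc ((2:ℝ) ^ (-l - 1)) ((2:ℝ) ^ (-l + 1))) := by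
            apply mul_le_mul_of_nonneg_left (hSnn x hx)
            positivity
        _ ≤ lam := hlam_phi
    have hxp : x ^ (-β - 1 - 1 - 1) ≤ (2:ℝ) ^ (β + 3) := by
      have e1 : x ^ (-β - 1 - 1 - 1) = (x ^ (β + 3))⁻¹ := by
        rw [show -β - 1 - 1 - 1 = -(β + 3) by ring, Real.rpow_neg hxpos.le]
      rw [e1, ← Real.inv_rpow hxpos.le]
      apply Real.rpow_le_rpow (by positivity) (by rw [inv_le_comm₀ hxpos (by norm_num)]; linarith [hx.1]) (by linarith)
    have h2 : |b * (-β * ((-β - 1) * ((-β - 1 - 1) * x ^ (-β - 1 - 1 - 1))))| ≤ lam * M := by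
      have heq : |b * (-β * ((-β - 1) * ((-β - 1 - 1) * x ^ (-β - 1 - 1 - 1))))| =
          b * (β * (β + 1) * (β + 2)) * x ^ (-β - 1 - 1 - 1) := by
        rw [abs_mul, abs_mul, abs_mul, abs_mul, abs_of_pos hb0,
          abs_of_pos (Real.rpow_pos_of_pos hxpos _),
          abs_of_neg (by linarith : -β < 0), abs_of_neg (by linarith : -β - 1 < 0),
          abs_of_neg (by linarith : -β - 1 - 1 < 0)]
        ring
      rw [heq, hM]
      calc b * (β * (β + 1) * (β + 2)) * x ^ (-β - 1 - 1 - 1)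
          ≤ lam * (β * (β + 1) * (β + 2)) * (2:ℝ) ^ (β + 3) := by
            apply mul_le_mul (mul_le_mul_of_nonneg_right hlam_b (by positivity)) hxp
              (by positivity) (by positivity)
        _ = lam * (β * (β + 1) * (β + 2) * (2:ℝ) ^ (β + 3)) := by ring
    calc ‖G3 x‖ ≤ |ξlast * (φ''' (a * x) * a * a * a)| +
          |b * (-β * ((-β - 1) * ((-β - 1 - 1) * x ^ (-β - 1 - 1 - 1))))| := abs_add_le _ _
      _ ≤ lam + lam * M := add_le_add h1 h2
  -- mean value inequality
  have hmvt : ‖G2 r - G2 r₀‖ ≤ (lam + lam * M) * ‖r - r₀‖ :=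
    Convex.norm_image_sub_le_of_norm_hasDerivWithin_le hG3 hbound (convex_Icc _ _) hr₀ hr
  -- ε₁ bounds
  have hε₁a : ε₁ ≤ ε / 8 := hε₁ ▸ min_le_right _ _
  have hε₁b : ε₁ ≤ ε / (4 * β * (β + 1) * (β + 2) * (2:ℝ) ^ (β + 3)) :=
    hε₁ ▸ le_trans (min_le_left _ _) (min_le_right _ _)
  have h4M : 4 * β * (β + 1) * (β + 2) * (2:ℝ) ^ (β + 3) = 4 * M := by rw [hM]; ring
  have hrr : |r - r₀| ≥ 0 := abs_nonneg _
  have hdiff : (lam + lam * M) * |r - r₀| ≤ 3 / 8 * (ε * lam) := by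
    have h1 : lam * |r - r₀| ≤ lam * (ε / 8) :=
      mul_le_mul_of_nonneg_left (le_trans hclose_r.le hε₁a) hlam0.le
    have h2 : lam * M * |r - r₀| ≤ lam * M * (ε / (4 * M)) := by
      apply mul_le_mul_of_nonneg_left _ (by positivity)
      refine le_trans hclose_r.le (le_trans hε₁b ?_)
      rw [h4M]
    have h3 : lam * M * (ε / (4 * M)) = lam * ε / 4 := by
      field_simp
    rw [h3] at h2
    nlinarith
  rw [hG2 θ r hrpos]
  rw [hG2 θ₀ r₀ hr₀pos] at h₀
  have habs : |G2 r₀| - |G2 r| ≤ |G2 r₀ - G2 r| := abs_sub_abs_le_abs_sub _ _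
  have : |G2 r₀ - G2 r| ≤ 3 / 8 * (ε * lam) := by
    rw [abs_sub_comm]
    calc |G2 r - G2 r₀| ≤ (lam + lam * M) * |r - r₀| := hmvt
      _ ≤ 3 / 8 * (ε * lam) := hdiff
  have hεlam : 0 ≤ ε * lam := by positivity
  have h₀' : ε * lam ≤ |G2 r₀| := h₀
  have hgoal : ε * lam / 2 ≤ |G2 r| := by linarith
  exact hgoal
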